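/- arXiv:2605.01606 — 3 statements merged into one kernel-verified Lean document; each statement's English description precedes it below -/
import Mathlib

section
/- Under perfect ranking with fixed set size k and m → ∞ (so n = mk → ∞), fix p ∈ (0,1) and set r_p = np if np is an integer and r_p = ⌊np⌋ + 1 otherwise. If F is continuous and strictly increasing at ζ_p, in the sense that F(ζ_p − ε) < p < F(ζ_p + ε) for every ε > 0, then the r_p-th order statistic Y*_{(r_p)} of the pooled ranked set sample converges in probability to ζ_p as m → ∞. -/
open MeasureTheory ProbabilityTheory Filter intervalIntegral

/-- The beta function `B(a,b) = ∫₀¹ u^(a-1) (1-u)^(b-1) du`. -/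
noncomputable def betaFun (a b : ℝ) : ℝ :=
  ∫ u in (0:ℝ)..1, u ^ (a - 1) * (1 - u) ^ (b - 1)

/-- The regularized incomplete beta function `IB_{a,b}(t)`. -/
noncomputable def IB (a b t : ℝ) : ℝ :=
  (∫ u in (0:ℝ)..t, u ^ (a - 1) * (1 - u) ^ (b - 1)) / betaFun a b

/-- The `i`-th order statistic (1-based) of the pooled values `fun idx => Y idx ω`. -/
noncomputable def orderStat {Ω ι : Type*} [Fintype ι] (Y : ι → Ω → ℝ) (i : ℕ) (ω : Ω) : ℝ :=
  ((Finset.univ.val.map fun idx => Y idx ω).sort (· ≤ ·)).getD (i - 1) 0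


lemma cont_poly (r s : ℕ) : Continuous (fun u : ℝ => u ^ r * (1 - u) ^ s) := by
  continuity

lemma Ipoly_eq (r s : ℕ) :
    (∫ u in (0:ℝ)..1, u ^ r * (1 - u) ^ s)
      = (r.factorial * s.factorial : ℝ) / (r + s + 1).factorial := by
  induction s generalizing r with
  | zero =>
      simp only [pow_zero, mul_one, integral_pow]
      rw [Nat.factorial_zero, Nat.factorial_succ]
      push_cast
      field_simp
      simp
  | succ s ih =>
      have key : ∫ u in (0:ℝ)..1,
          (((r:ℝ)+1) * u ^ r * (1 - u) ^ (s+1) - ((s:ℝ)+1) * (u ^ (r+1) * (1 - u) ^ s))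
          = 0 := by
        have h := intervalIntegral.integral_eq_sub_of_hasDerivAt
          (f := fun u : ℝ => u ^ (r+1) * (1 - u) ^ (s+1))
          (f' := fun u : ℝ => ((r:ℝ)+1) * u ^ r * (1 - u) ^ (s+1)
            - ((s:ℝ)+1) * (u ^ (r+1) * (1 - u) ^ s)) (a := 0) (b := 1)
          ?_ ?_
        · simpa using h
        · intro x _
          have h1 : HasDerivAt (fun u : ℝ => u ^ (r+1)) (((r:ℝ)+1) * x ^ r) x := by
            simpa using hasDerivAt_pow (r+1) x
          have h2 : HasDerivAt (fun u : ℝ => (1 - u) ^ (s+1))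
              (-(((s:ℝ)+1) * (1 - x) ^ s)) x := by
            have hb : HasDerivAt (fun u : ℝ => 1 - u) (-1) x := by
              exact (hasDerivAt_id' x).const_sub 1
            have := (hasDerivAt_pow (s+1) (1 - x)).comp x hb
            exact this.congr_deriv (by rw [Nat.add_sub_cancel]; push_cast; ring)
          have := h1.mul h2
          exact this.congr_deriv (by ring)
        · apply Continuous.intervalIntegrable
          continuity
      rw [intervalIntegral.integral_sub] at key
      · simp_rw [mul_assoc] at key
        rw [intervalIntegral.integral_const_mul, intervalIntegral.integral_const_mul] at key
        have hI : ∫ u in (0:ℝ)..1, u ^ r * (1 - u) ^ (s+1)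
            = (((s:ℝ)+1) / ((r:ℝ)+1)) * ∫ u in (0:ℝ)..1, u ^ (r+1) * (1 - u) ^ s := by
          have hr : ((r:ℝ)+1) ≠ 0 := by positivity
          field_simp at key ⊢
          linarith [key]
        rw [hI, ih (r+1)]
        have e1 : r + 1 + s + 1 = r + (s+1) + 1 := by ring
        rw [e1, Nat.factorial_succ r, Nat.factorial_succ s]
        have h1 : ((r:ℝ)+1) ≠ 0 := by positivity
        have h2 : (((r+(s+1)+1 : ℕ)).factorial : ℝ) ≠ 0 := by
          exact_mod_cast Nat.factorial_ne_zero _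
        push_cast
        field_simp
      · apply Continuous.intervalIntegrable
        continuity
      · apply Continuous.intervalIntegrable
        continuity

lemma IB_eq_poly {k r : ℕ} (hr : r < k) (t : ℝ) :
    IB ((r:ℝ)+1) ((k:ℝ)-r) t
      = (∫ u in (0:ℝ)..t, u ^ r * (1-u) ^ (k-1-r)) * ((k:ℝ) * ((k-1).choose r)) := by
  have h1 : 1 ≤ k := by omega
  have h2 : r ≤ k - 1 := Nat.le_pred_of_lt hr
  have hcast : ((k:ℝ) - r - 1) = ((k-1-r : ℕ) : ℝ) := by
    rw [Nat.cast_sub h2, Nat.cast_sub h1, Nat.cast_one]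
    ring
  have integrand : ∀ u : ℝ,
      u ^ (((r:ℝ)+1) - 1) * (1-u) ^ (((k:ℝ)-(r:ℝ)) - 1) = u ^ r * (1-u) ^ (k-1-r) := by
    intro u
    have e1 : ((r:ℝ)+1) - 1 = ((r:ℕ) : ℝ) := by ring
    rw [e1, show ((k:ℝ)-(r:ℝ)) - 1 = ((k-1-r : ℕ) : ℝ) from hcast,
      Real.rpow_natCast, Real.rpow_natCast]
  unfold IB betaFun
  simp_rw [integrand]
  rw [Ipoly_eq r (k-1-r), show r + (k-1-r) + 1 = k by omega, div_eq_mul_inv]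
  congr 1
  rw [inv_div, div_eq_iff (mul_ne_zero (by exact_mod_cast Nat.factorial_ne_zero r)
    (by exact_mod_cast Nat.factorial_ne_zero (k-1-r)))]
  have hch : (k-1).choose r * r.factorial * (k-1-r).factorial = (k-1).factorial :=
    Nat.choose_mul_factorial_mul_factorial h2
  have hkf : k.factorial = k * (k-1).factorial := by
    conv_lhs => rw [show k = (k-1) + 1 by omega]
    rw [Nat.factorial_succ, show k - 1 + 1 = k by omega]
  have hna : k.factorial = k * ((k-1).choose r) * (r.factorial * (k-1-r).factorial) := by
    rw [hkf, ← hch]; ring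
  exact_mod_cast hna

lemma sum_IB {k : ℕ} (hk : 1 ≤ k) (t : ℝ) :
    ∑ r ∈ Finset.range k, IB ((r:ℝ)+1) ((k:ℝ)-(r:ℝ)) t = k * t := by
  have step : ∀ r ∈ Finset.range k,
      IB ((r:ℝ)+1) ((k:ℝ)-(r:ℝ)) t
        = ∫ u in (0:ℝ)..t, ((k:ℝ) * ((k-1).choose r)) * (u ^ r * (1-u) ^ (k-1-r)) := by
    intro r hr
    rw [IB_eq_poly (Finset.mem_range.mp hr), intervalIntegral.integral_const_mul]
    ring
  rw [Finset.sum_congr rfl step, ← intervalIntegral.integral_finset_sum]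
  · have inner : ∀ u : ℝ,
        (∑ r ∈ Finset.range k, ((k:ℝ) * ((k-1).choose r)) * (u ^ r * (1-u) ^ (k-1-r)))
          = (k:ℝ) := by
      intro u
      have hpow := add_pow u (1-u) (k-1)
      rw [show u + (1-u) = 1 by ring, one_pow, show k-1+1 = k by omega] at hpow
      calc ∑ r ∈ Finset.range k, ((k:ℝ) * ((k-1).choose r)) * (u ^ r * (1-u) ^ (k-1-r))
          = (k:ℝ) * ∑ r ∈ Finset.range k, u ^ r * (1-u) ^ (k-1-r) * ((k-1).choose r) := by
            rw [Finset.mul_sum]; exact Finset.sum_congr rfl fun r _ => by ring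
        _ = (k:ℝ) := by rw [← hpow, mul_one]
    simp_rw [inner]
    simp [mul_comm]
  · intro r hr
    apply Continuous.intervalIntegrable
    continuity

lemma getD_le_of_le_countP (l : List ℝ) (hl : l.Pairwise (· ≤ ·)) (r : ℕ) (hr : 0 < r)
    (x : ℝ) (h : r ≤ l.countP (fun v => decide (v ≤ x))) : l.getD (r-1) 0 ≤ x := by
  by_contra hx
  push_neg at hx
  have hlen : r ≤ l.length := h.trans List.countP_le_length
  have hi : r - 1 < l.length := by omega
  have hget : l.getD (r-1) 0 = l.get ⟨r-1, hi⟩ := by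
    rw [List.getD_eq_getElem?_getD, List.getElem?_eq_getElem hi]
    rfl
  have hdrop : (l.drop (r-1)).countP (fun v => decide (v ≤ x)) = 0 := by
    rw [List.countP_eq_zero]
    intro a ha
    obtain ⟨j, hj⟩ := List.mem_iff_get.mp ha
    have hjlt : r - 1 + j.1 < l.length := by
      have := j.2; simp [List.length_drop] at this; omega
    have haj : a = l.get ⟨r - 1 + j.1, hjlt⟩ := by
      rw [← hj]
      show (l.drop (r-1))[j.1] = _
      rw [List.getElem_drop]
      rfl
    have hle : l.get ⟨r-1, hi⟩ ≤ l.get ⟨r - 1 + j.1, hjlt⟩ :=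
      hl.rel_get_of_le (Fin.mk_le_mk.mpr (Nat.le_add_right _ _))
    simp only [decide_eq_true_eq]
    push_neg
    calc x < l.getD (r-1) 0 := hx
    _ = l.get ⟨r-1, hi⟩ := hget
    _ ≤ _ := hle
    _ = a := haj.symm
  have := l.take_append_drop (r-1)
  have hcount : l.countP (fun v => decide (v ≤ x))
      = (l.take (r-1)).countP (fun v => decide (v ≤ x)) := by
    conv_lhs => rw [← this]
    rw [List.countP_append, hdrop, Nat.add_zero]
  have : l.countP (fun v => decide (v ≤ x)) ≤ r - 1 := by
    rw [hcount]
    exact (List.countP_le_length).trans (by simp [List.length_take])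
  omega

lemma le_countP_of_getD_le (l : List ℝ) (hl : l.Pairwise (· ≤ ·)) (r : ℕ) (hr : 0 < r)
    (hlen : r ≤ l.length) (x : ℝ) (h : l.getD (r-1) 0 ≤ x) :
    r ≤ l.countP (fun v => decide (v ≤ x)) := by
  have hi : r - 1 < l.length := by omega
  have hget : l.getD (r-1) 0 = l.get ⟨r-1, hi⟩ := by
    rw [List.getD_eq_getElem?_getD, List.getElem?_eq_getElem hi]
    rfl
  have htake : (l.take r).countP (fun v => decide (v ≤ x)) = r := by
    have hall : ∀ a ∈ l.take r, (fun v => decide (v ≤ x)) a = true := by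
      intro a ha
      obtain ⟨j, hj⟩ := List.mem_iff_get.mp ha
      have hjlen : (j : ℕ) < l.length := by
        have := j.2; simp [List.length_take] at this; omega
      have haj : a = l.get ⟨j.1, hjlen⟩ := by
        rw [← hj]
        show (l.take r)[j.1] = _
        rw [List.getElem_take]
        rfl
      have hjr : (j : ℕ) ≤ r - 1 := by
        have := j.2; simp [List.length_take] at this; omega
      have hle : l.get ⟨j.1, hjlen⟩ ≤ l.get ⟨r-1, hi⟩ := hl.rel_get_of_le (by simpa)
      simp only [decide_eq_true_eq]
      rw [haj]
      exact hle.trans (hget ▸ h)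
    rw [List.countP_eq_length.mpr hall, List.length_take]
    omega
  calc r = (l.take r).countP (fun v => decide (v ≤ x)) := htake.symm
  _ ≤ l.countP (fun v => decide (v ≤ x)) := by
      conv_rhs => rw [← l.take_append_drop r]
      rw [List.countP_append]
      omega

lemma indicator_integral {Ω : Type*} [MeasurableSpace Ω] (P : Measure Ω)
    [IsProbabilityMeasure P] (Z : Ω → ℝ) (hZ : Measurable Z) (x : ℝ) :
    ∫ ω, (if Z ω ≤ x then (1:ℝ) else 0) ∂P = (P {ω | Z ω ≤ x}).toReal := by
  have hA : MeasurableSet {ω | Z ω ≤ x} := hZ measurableSet_Iic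
  calc ∫ ω, (if Z ω ≤ x then (1:ℝ) else 0) ∂P
      = ∫ ω, Set.indicator {ω' | Z ω' ≤ x} 1 ω ∂P := by
        apply MeasureTheory.integral_congr_ae
        filter_upwards with ω
        by_cases h : Z ω ≤ x <;> simp [Set.indicator_apply, Set.mem_setOf_eq, h]
    _ = (P {ω | Z ω ≤ x}).toReal := integral_indicator_one hA

lemma chebyshev_count {Ω : Type*} [MeasurableSpace Ω] (P : Measure Ω)
    [IsProbabilityMeasure P] {ι : Type*} [Fintype ι] (Z : ι → Ω → ℝ)
    (hmeas : ∀ i, Measurable (Z i))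
    (hindep : iIndepFun Z P) (x : ℝ) {c : ℝ} (hc : 0 < c) :
    P {ω | c ≤ |(∑ i, if Z i ω ≤ x then (1:ℝ) else 0)
        - ∑ i, (P {ω' | Z i ω' ≤ x}).toReal|}
      ≤ ENNReal.ofReal ((Fintype.card ι) / c^2) := by
  classical
  set g : ℝ → ℝ := fun y => if y ≤ x then (1:ℝ) else 0 with hg
  have hgmeas : Measurable g := by
    apply Measurable.ite (by exact measurableSet_Iic) measurable_const measurable_const
  set X : ι → Ω → ℝ := fun i ω => g (Z i ω) with hX
  have hXmeas : ∀ i, Measurable (X i) := fun i => hgmeas.comp (hmeas i)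
  have hXbdd : ∀ i ω, X i ω ∈ Set.Icc (0:ℝ) 1 := by
    intro i ω; simp only [hX, hg]
    split <;> simp
  have hXmem : ∀ i, MemLp (X i) 2 P := by
    intro i
    refine (memLp_top_of_bound (hXmeas i).aestronglyMeasurable 1 ?_).mono_exponent le_top
    filter_upwards with ω
    have := hXbdd i ω
    rw [Real.norm_eq_abs, abs_le]
    constructor <;> linarith [this.1, this.2]
  have hXindep : iIndepFun X P := by
    exact hindep.comp (fun _ => g) (fun _ => hgmeas)
  set S : Ω → ℝ := ∑ i, X i with hS
  have hSmem : MemLp S 2 P := memLp_finset_sum' _ (fun i _ => hXmem i)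
  have hvar : variance S P ≤ (Fintype.card ι) := by
    rw [hS, IndepFun.variance_sum (fun i _ => hXmem i)
      (fun i _ j _ hij => hXindep.indepFun hij)]
    calc ∑ i : ι, variance (X i) P ≤ ∑ i : ι, 1 := by
          apply Finset.sum_le_sum
          intro i _
          have := variance_le_sq_of_bounded
            (ae_of_all P (fun ω => hXbdd i ω)) ((hXmeas i).aemeasurable)
          calc variance (X i) P ≤ ((1 - 0)/2)^2 := this
          _ ≤ 1 := by norm_num
    _ = (Fintype.card ι) := by simp
  have hmean : ∫ ω, S ω ∂P = ∑ i, (P {ω' | Z i ω' ≤ x}).toReal := by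
    have : ∫ ω, S ω ∂P = ∑ i : ι, ∫ ω, X i ω ∂P := by
      rw [hS]
      simp_rw [Finset.sum_apply]
      exact integral_finset_sum _ (fun i _ =>
        (memLp_one_iff_integrable.mp ((hXmem i).mono_exponent (by norm_num))))
    rw [this]
    exact Finset.sum_congr rfl fun i _ => indicator_integral P (Z i) (hmeas i) x
  have hcheb := meas_ge_le_variance_div_sq (μ := P) hSmem hc
  have hset : {ω | c ≤ |(∑ i, if Z i ω ≤ x then (1:ℝ) else 0)
        - ∑ i, (P {ω' | Z i ω' ≤ x}).toReal|}
      = {ω | c ≤ |S ω - ∫ ω', S ω' ∂P|} := by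
    ext ω
    rw [Set.mem_setOf_eq, Set.mem_setOf_eq, hmean]
    simp only [hS, Finset.sum_apply, hX, hg]
  rw [hset]
  refine hcheb.trans (ENNReal.ofReal_le_ofReal ?_)
  gcongr


/-- Under perfect ranking with fixed set size `k` and `m → ∞` (so `n = m k → ∞`), fix
`p ∈ (0,1)` and set `r_p = ⌈n p⌉` (which equals `n p` if `n p` is an integer and
`⌊n p⌋ + 1` otherwise).  If `F` is continuous and strictly increasing at `ζ_p`, in the
sense that `F (ζ_p - ε) < p < F (ζ_p + ε)` for every `ε > 0`, then the `r_p`-th order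
statistic of the pooled ranked set sample converges in probability to `ζ_p`. -/
theorem orderStat_tendsto_quantile
    {Ω : Type*} [MeasurableSpace Ω] (P : Measure Ω) [IsProbabilityMeasure P]
    (μ : Measure ℝ) [IsProbabilityMeasure μ] (F : ℝ → ℝ)
    (hF : ∀ y, F y = (μ (Set.Iic y)).toReal)
    (k : ℕ) (hk : 1 ≤ k)
    (Y : (m : ℕ) → Fin k × Fin m → Ω → ℝ)
    (hmeas : ∀ m i, Measurable (Y m i))
    (hindep : ∀ m, iIndepFun (Y m) P)
    (hcdf : ∀ (m : ℕ) (i : Fin k × Fin m) (y : ℝ),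
      (P {ω | Y m i ω ≤ y}).toReal = IB ((i.1 : ℝ) + 1) ((k : ℝ) - (i.1 : ℝ)) (F y))
    (p : ℝ) (hp : p ∈ Set.Ioo (0:ℝ) 1)
    (ζ : ℝ) (hζ : ζ = sInf {y : ℝ | F y ≥ p})
    (hFζ : ∀ ε > (0:ℝ), F (ζ - ε) < p ∧ p < F (ζ + ε)) :
    ∀ ε > (0:ℝ),
      Tendsto (fun m : ℕ =>
          P {ω | |orderStat (Y m) (Int.toNat ⌈((m * k : ℕ) : ℝ) * p⌉) ω - ζ| > ε})
        atTop (nhds 0) := by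
  intro ε hε
  obtain ⟨hqm, hqp⟩ := hFζ ε hε
  have hdp : (0:ℝ) < F (ζ + ε) - p := by linarith
  have hdm : (0:ℝ) < p - F (ζ - ε) := by linarith
  set Bnd : ℕ → ENNReal := fun m =>
    ENNReal.ofReal ((k*m : ℕ) / ((((m*k:ℕ)):ℝ) * (F (ζ + ε) - p))^2)
      + ENNReal.ofReal ((k*m : ℕ) / ((((m*k:ℕ)):ℝ) * (p - F (ζ - ε)))^2) with hBnd
  -- the bound tends to zero
  have hmk : Tendsto (fun m : ℕ => (((m*k:ℕ)):ℝ)) atTop atTop := by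
    apply tendsto_natCast_atTop_atTop.comp
    exact tendsto_atTop_mono (fun m => Nat.le_mul_of_pos_right m hk) tendsto_id
  have hterm : ∀ δ : ℝ, 0 < δ →
      Tendsto (fun m : ℕ => ENNReal.ofReal ((k*m : ℕ) / ((((m*k:ℕ)):ℝ) * δ)^2))
        atTop (nhds 0) := by
    intro δ hδ
    have h1 : Tendsto (fun m : ℕ => ((k*m : ℕ):ℝ) / ((((m*k:ℕ)):ℝ) * δ)^2) atTop (nhds 0) := by
      have heq : ∀ᶠ m : ℕ in atTop,
          (1/δ^2) * ((((m*k:ℕ)):ℝ))⁻¹ = ((k*m : ℕ):ℝ) / ((((m*k:ℕ)):ℝ) * δ)^2 := by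
        filter_upwards [eventually_ge_atTop 1] with m hm
        have hpos : (0:ℝ) < ((m*k:ℕ):ℝ) := by
          have : 1 ≤ m*k := Nat.one_le_iff_ne_zero.mpr (by positivity)
          exact_mod_cast this
        have hkm : ((k*m : ℕ):ℝ) = ((m*k : ℕ):ℝ) := by rw [Nat.mul_comm]
        rw [hkm]
        field_simp
      have h2 : Tendsto (fun m : ℕ => (1/δ^2) * ((((m*k:ℕ)):ℝ))⁻¹) atTop
          (nhds ((1/δ^2) * 0)) := (hmk.inv_tendsto_atTop).const_mul _
      rw [mul_zero] at h2
      exact Tendsto.congr' heq h2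
    have := (ENNReal.continuous_ofReal.tendsto 0).comp h1
    rw [ENNReal.ofReal_zero] at this; exact this
  have hBnd0 : Tendsto Bnd atTop (nhds 0) := by
    rw [hBnd]
    have := (hterm _ hdp).add (hterm _ hdm)
    simpa using this
  -- the measure is eventually below the bound
  have hle : ∀ᶠ m : ℕ in atTop,
      P {ω | |orderStat (Y m) (Int.toNat ⌈((m * k : ℕ) : ℝ) * p⌉) ω - ζ| > ε} ≤ Bnd m := by
    filter_upwards [eventually_ge_atTop 1] with m hm
    have hp0 : (0:ℝ) < p := hp.1
    have hp1 : p < 1 := hp.2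
    have hn1 : 1 ≤ m * k := Nat.one_le_iff_ne_zero.mpr (by positivity)
    set N : ℝ := ((m * k : ℕ) : ℝ) with hN
    have hNpos : (0:ℝ) < N := by rw [hN]; exact_mod_cast hn1
    set r : ℕ := (⌈N * p⌉).toNat with hr
    have hceilpos : (0:ℤ) < ⌈N * p⌉ := Int.ceil_pos.mpr (by positivity)
    have hrpos : 0 < r := by rw [hr]; omega
    have hrcast : ((r:ℕ):ℝ) = ((⌈N * p⌉ : ℤ) : ℝ) := by
      rw [hr]
      have := Int.toNat_of_nonneg hceilpos.le
      exact_mod_cast congrArg (fun z : ℤ => (z : ℝ)) this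
    have hrgeNp : N * p ≤ (r:ℝ) := by rw [hrcast]; exact Int.le_ceil _
    have hrlt : (r:ℝ) - 1 < N * p := by
      have := Int.ceil_lt_add_one (N * p)
      have h2 : ((⌈N * p⌉ : ℤ) : ℝ) < N * p + 1 := by exact_mod_cast this
      rw [hrcast]; linarith
    have hrlen : r ≤ m * k := by
      rw [hr]
      apply Int.toNat_le.mpr
      apply Int.ceil_le.mpr
      push_cast
      rw [hN] at *
      push_cast at *
      nlinarith
    -- sums of means
    have hsum : ∀ x : ℝ, (∑ i : Fin k × Fin m, (P {ω' | Y m i ω' ≤ x}).toReal) = N * F x := by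
      intro x
      rw [Finset.sum_congr rfl (fun i _ => hcdf m i x), Fintype.sum_prod_type]
      simp only [Finset.sum_const, Finset.card_univ, Fintype.card_fin, nsmul_eq_mul]
      rw [← Finset.mul_sum,
        Fin.sum_univ_eq_sum_range (fun a => IB ((a:ℝ)+1) ((k:ℝ)-(a:ℝ)) (F x)) k, sum_IB hk]
      rw [hN]; push_cast; ring
    -- counting bridge
    have hcount : ∀ (x : ℝ) (ω : Ω),
        ((((Finset.univ.val.map fun idx => Y m idx ω).sort (· ≤ ·)).countP
            (fun v => decide (v ≤ x)) : ℕ) : ℝ)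
          = ∑ i : Fin k × Fin m, (if Y m i ω ≤ x then (1:ℝ) else 0) := by
      intro x ω
      rw [Finset.sum_boole]
      norm_cast
      have h1 : Multiset.countP (fun v => v ≤ x)
            (Finset.univ.val.map fun idx => Y m idx ω)
          = ((Finset.univ.val.map fun idx => Y m idx ω).sort (· ≤ ·)).countP
              (fun v => decide (v ≤ x)) := by
        conv_lhs => rw [← Multiset.sort_eq (Finset.univ.val.map fun idx => Y m idx ω) (· ≤ ·)]
        rw [Multiset.coe_countP]
      rw [← h1, Multiset.countP_map]
      rfl
    have hlen : ∀ ω : Ω,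
        (((Finset.univ.val.map fun idx => Y m idx ω).sort (· ≤ ·))).length = m * k := by
      intro ω
      rw [Multiset.length_sort, Multiset.card_map]
      simp [Nat.mul_comm]
    have hos : ∀ ω : Ω, orderStat (Y m) r ω
        = (((Finset.univ.val.map fun idx => Y m idx ω).sort (· ≤ ·))).getD (r-1) 0 := by
      intro ω; rfl
    -- inclusion, upper side
    have hAsub : {ω | ζ + ε < orderStat (Y m) r ω}
        ⊆ {ω | N * (F (ζ + ε) - p) ≤ |(∑ i : Fin k × Fin m,
            if Y m i ω ≤ ζ + ε then (1:ℝ) else 0)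
          - ∑ i : Fin k × Fin m, (P {ω' | Y m i ω' ≤ ζ + ε}).toReal|} := by
      intro ω hω
      simp only [Set.mem_setOf_eq] at hω ⊢
      rw [hsum (ζ + ε), ← hcount (ζ + ε) ω]
      set c := (((Finset.univ.val.map fun idx => Y m idx ω).sort (· ≤ ·)).countP
        (fun v => decide (v ≤ ζ + ε)) : ℕ) with hc
      have hnotle : ¬ (r ≤ c) := by
        intro hcontra
        have hgd := getD_le_of_le_countP _ (Multiset.pairwise_sort _ _) r hrpos (ζ + ε) hcontra
        rw [← hos ω] at hgd
        linarith
      push_neg at hnotle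
      have hcr : (c:ℝ) + 1 ≤ (r:ℝ) := by exact_mod_cast hnotle
      refine le_abs.mpr (Or.inr ?_)
      linarith
    -- inclusion, lower side
    have hBsub : {ω | orderStat (Y m) r ω < ζ - ε}
        ⊆ {ω | N * (p - F (ζ - ε)) ≤ |(∑ i : Fin k × Fin m,
            if Y m i ω ≤ ζ - ε then (1:ℝ) else 0)
          - ∑ i : Fin k × Fin m, (P {ω' | Y m i ω' ≤ ζ - ε}).toReal|} := by
      intro ω hω
      simp only [Set.mem_setOf_eq] at hω ⊢
      rw [hsum (ζ - ε), ← hcount (ζ - ε) ω]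
      have hgd : (((Finset.univ.val.map fun idx => Y m idx ω).sort (· ≤ ·))).getD (r-1) 0
          ≤ ζ - ε := by rw [← hos ω]; linarith
      have hcge := le_countP_of_getD_le _ (Multiset.pairwise_sort _ _) r hrpos
        (by rw [hlen ω]; exact hrlen) (ζ - ε) hgd
      have hcr : (r:ℝ) ≤ ((((Finset.univ.val.map fun idx => Y m idx ω).sort (· ≤ ·)).countP
          (fun v => decide (v ≤ ζ - ε)) : ℕ) : ℝ) := by exact_mod_cast hcge
      refine le_abs.mpr (Or.inl ?_)
      linarith
    -- Chebyshev bounds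
    have hcp : (0:ℝ) < N * (F (ζ + ε) - p) := by positivity
    have hcm : (0:ℝ) < N * (p - F (ζ - ε)) := by positivity
    have hchebP := chebyshev_count P (Y m) (hmeas m) (hindep m) (ζ + ε) hcp
    have hchebM := chebyshev_count P (Y m) (hmeas m) (hindep m) (ζ - ε) hcm
    have hcard : ((Fintype.card (Fin k × Fin m) : ℕ) : ℝ) = ((k * m : ℕ) : ℝ) := by
      simp
    -- main set inclusion
    have hmain : {ω | |orderStat (Y m) r ω - ζ| > ε}
        ⊆ {ω | ζ + ε < orderStat (Y m) r ω} ∪ {ω | orderStat (Y m) r ω < ζ - ε} := by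
      intro ω hω
      simp only [Set.mem_setOf_eq, Set.mem_union] at hω ⊢
      rcases lt_abs.mp hω with h | h
      · left; linarith
      · right; linarith
    calc P {ω | |orderStat (Y m) r ω - ζ| > ε}
        ≤ P ({ω | ζ + ε < orderStat (Y m) r ω} ∪ {ω | orderStat (Y m) r ω < ζ - ε}) :=
          measure_mono hmain
      _ ≤ P {ω | ζ + ε < orderStat (Y m) r ω} + P {ω | orderStat (Y m) r ω < ζ - ε} :=
          measure_union_le _ _
      _ ≤ Bnd m := by
          rw [hBnd]
          refine add_le_add ((measure_mono hAsub).trans (hchebP.trans ?_))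
            ((measure_mono hBsub).trans (hchebM.trans ?_))
          · rw [hcard]
          · rw [hcard]
  exact tendsto_of_tendsto_of_tendsto_of_le_of_le' tendsto_const_nhds hBnd0
    (Eventually.of_forall (fun m => zero_le)) hle
end

section
/- Under perfect ranking with F continuous, set q_r(t) = IB_{r,k-r+1}(t) for t ∈ [0,1]. Then for each i ∈ {1,…,n} and each y ∈ ℝ, the CDF of the i-th pooled order statistic satisfies G_i(y) := P(Y*_{(i)} ≤ y) = ∑_{j=i}^n c_j(F(y)), where c_j(t) denotes the coefficient of z^j in the polynomial P(z;t) = ∏_{r=1}^k ((1 − q_r(t)) + q_r(t) z)^m. -/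
open MeasureTheory ProbabilityTheory Filter Polynomial

open Classical in
lemma sorted_getD_le_iff (l : List ℝ) (hl : l.Pairwise (· ≤ ·)) (y : ℝ) (i : ℕ)
    (hi : 1 ≤ i) (hil : i ≤ l.length) :
    l.getD (i-1) 0 ≤ y ↔ i ≤ l.countP (fun a => decide (a ≤ y)) := by
  have hlt : i - 1 < l.length := by omega
  rw [l.getD_eq_getElem 0 hlt]
  constructor
  · intro h
    have : l.countP (fun a => decide (a ≤ y))
        = (l.take i).countP (fun a => decide (a ≤ y))
          + (l.drop i).countP (fun a => decide (a ≤ y)) := by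
      rw [← List.countP_append, List.take_append_drop]
    rw [this]
    have h1 : (l.take i).countP (fun a => decide (a ≤ y)) = (l.take i).length := by
      apply List.countP_eq_length.mpr
      intro a ha
      simp only [decide_eq_true_eq]
      obtain ⟨j, hj, rfl⟩ := List.mem_iff_getElem.mp ha
      rw [List.getElem_take]
      have hjlt : j < i := by
        have := hj; rw [List.length_take] at this; omega
      calc l[j] ≤ l[i-1] := hl.rel_get_of_le (by simpa using Nat.le_pred_of_lt hjlt)
        _ ≤ y := h
    rw [h1, List.length_take]
    omega
  · intro h
    by_contra hcon
    push_neg at hcon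
    have hdrop : (l.drop (i-1)).countP (fun a => decide (a ≤ y)) = 0 := by
      apply List.countP_eq_zero.mpr
      intro a ha
      simp only [decide_eq_true_eq, not_le]
      obtain ⟨j, hj, rfl⟩ := List.mem_iff_getElem.mp ha
      have hj' : i - 1 + j < l.length := by
        simp only [List.length_drop] at hj; omega
      rw [List.getElem_drop (h := hj)]
      calc y < l[i-1] := hcon
        _ ≤ l[i-1+j] := hl.rel_get_of_le (by simp)
    have : l.countP (fun a => decide (a ≤ y))
        = (l.take (i-1)).countP (fun a => decide (a ≤ y))
          + (l.drop (i-1)).countP (fun a => decide (a ≤ y)) := by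
      rw [← List.countP_append, List.take_append_drop]
    rw [this, hdrop] at h
    have := List.countP_le_length (p := fun a => decide (a ≤ y)) (l := l.take (i-1))
    rw [List.length_take] at this
    omega

lemma coeff_prod_linear {ι : Type*} [Fintype ι] [DecidableEq ι] (q : ι → ℝ) (j : ℕ) :
    (∏ idx : ι, (C (q idx) * X + C (1 - q idx))).coeff j
      = ∑ S ∈ Finset.powersetCard j (Finset.univ : Finset ι),
          ∏ idx : ι, (if idx ∈ S then q idx else 1 - q idx) := by
  classical
  rw [Finset.prod_add, Polynomial.finset_sum_coeff]
  have hterm : ∀ t ∈ (Finset.univ : Finset ι).powerset,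
      ((∏ idx ∈ t, C (q idx) * X) * ∏ idx ∈ Finset.univ \ t, C (1 - q idx)).coeff j
      = if t.card = j then (∏ idx ∈ t, q idx) * ∏ idx ∈ Finset.univ \ t, (1 - q idx) else 0 := by
    intro t _
    rw [Finset.prod_mul_distrib, Finset.prod_const, ← map_prod, ← map_prod,
      mul_comm (C (∏ idx ∈ t, q idx)) (X ^ t.card), mul_assoc, ← map_mul,
      mul_comm (X ^ t.card), Polynomial.coeff_C_mul, Polynomial.coeff_X_pow,
      mul_ite, mul_one, mul_zero]
    simp [eq_comm]
  rw [Finset.sum_congr rfl hterm, ← Finset.sum_filter, ← Finset.powersetCard_eq_filter]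
  refine Finset.sum_congr rfl fun S hS => ?_
  rw [Finset.prod_ite]
  congr 1
  · apply Finset.prod_congr _ fun _ _ => rfl
    ext x; simp
  · apply Finset.prod_congr _ fun _ _ => rfl
    ext x; simp [Finset.mem_sdiff]

/-- Under perfect ranking with `F` continuous, setting `q_r(t) = IB_{r,k-r+1}(t)`,
the CDF of the `i`-th pooled order statistic satisfies
`G_i(y) = P(Y*_(i) ≤ y) = ∑_{j=i}^n c_j(F y)`, where `c_j(t)` is the coefficient of
`z^j` in `P(z;t) = ∏_{r=1}^k ((1 - q_r(t)) + q_r(t) z)^m`. -/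
theorem orderStat_cdf_poly
    {Ω : Type*} [MeasurableSpace Ω] (P : Measure Ω) [IsProbabilityMeasure P]
    (μ : Measure ℝ) [IsProbabilityMeasure μ] (F : ℝ → ℝ)
    (hF : ∀ y, F y = (μ (Set.Iic y)).toReal) (hFcont : Continuous F)
    (k m : ℕ) (hk : 1 ≤ k) (hm : 1 ≤ m)
    (Y : Fin k × Fin m → Ω → ℝ)
    (hmeas : ∀ i, Measurable (Y i))
    (hindep : iIndepFun Y P)
    (hcdf : ∀ (i : Fin k × Fin m) (y : ℝ),
      (P {ω | Y i ω ≤ y}).toReal = IB ((i.1 : ℝ) + 1) ((k : ℝ) - (i.1 : ℝ)) (F y))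
    (i : ℕ) (hi : 1 ≤ i) (hin : i ≤ m * k) (y : ℝ) :
    (P {ω | orderStat Y i ω ≤ y}).toReal
      = ∑ j ∈ Finset.Icc i (m * k),
          (∏ r : Fin k,
            (Polynomial.C (1 - IB ((r : ℝ) + 1) ((k : ℝ) - (r : ℝ)) (F y))
              + Polynomial.C (IB ((r : ℝ) + 1) ((k : ℝ) - (r : ℝ)) (F y)) * Polynomial.X) ^ m
          ).coeff j := by
  classical
  set q : Fin k × Fin m → ℝ :=
    fun idx => IB ((idx.1 : ℝ) + 1) ((k : ℝ) - (idx.1 : ℝ)) (F y) with hqdef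
  set A : Fin k × Fin m → Set Ω := fun idx => {ω | Y idx ω ≤ y} with hAdef
  have hAmeas : ∀ idx, MeasurableSet (A idx) := fun idx => (hmeas idx) measurableSet_Iic
  have hcardu : (Finset.univ : Finset (Fin k × Fin m)).card = m * k := by
    simp [Nat.mul_comm]
  -- Step A : event rewriting
  have hset : {ω | orderStat Y i ω ≤ y}
      = {ω | i ≤ (Finset.univ.filter fun idx => ω ∈ A idx).card} := by
    ext ω
    simp only [Set.mem_setOf_eq, orderStat]
    set l := ((Finset.univ.val.map fun idx => Y idx ω).sort (· ≤ ·)) with hl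
    have hsorted : l.Pairwise (· ≤ ·) := Multiset.pairwise_sort _ _
    have hlen : l.length = m * k := by
      rw [hl, Multiset.length_sort, Multiset.card_map]
      exact hcardu
    rw [sorted_getD_le_iff l hsorted y i hi (by omega)]
    have hcount : l.countP (fun a => decide (a ≤ y))
        = (Finset.univ.filter fun idx => ω ∈ A idx).card := by
      rw [hl, ← Multiset.coe_countP (p := fun a : ℝ => a ≤ y), Multiset.sort_eq,
        Multiset.countP_map]
      rfl
    rw [hcount]
  -- the elementary events
  set E : Finset (Fin k × Fin m) → Set Ω :=
    fun S => ⋂ idx, (if idx ∈ S then A idx else (A idx)ᶜ) with hEdef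
  have hE_eq : ∀ S, E S = {ω | (Finset.univ.filter fun idx => ω ∈ A idx) = S} := by
    intro S
    ext ω
    simp only [hEdef, Set.mem_iInter, Set.mem_setOf_eq, Finset.ext_iff, Finset.mem_filter,
      Finset.mem_univ, true_and]
    refine forall_congr' fun idx => ?_
    by_cases h : idx ∈ S <;> simp [h]
  have hEmeas : ∀ S, MeasurableSet (E S) := by
    intro S
    refine MeasurableSet.iInter fun idx => ?_
    by_cases h : idx ∈ S <;> simp only [h, if_true, if_false]
    · exact hAmeas idx
    · exact (hAmeas idx).compl
  have hEP : ∀ S, P (E S) = ∏ idx, P (if idx ∈ S then A idx else (A idx)ᶜ) := by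
    intro S
    refine hindep.meas_iInter fun idx => ?_
    by_cases h : idx ∈ S <;> simp only [h, if_true, if_false]
    · exact ⟨Set.Iic y, measurableSet_Iic, rfl⟩
    · exact ⟨(Set.Iic y)ᶜ, measurableSet_Iic.compl, rfl⟩
  have hPA : ∀ idx, (P (A idx)).toReal = q idx := fun idx => hcdf idx y
  have hPAc : ∀ idx, (P ((A idx)ᶜ)).toReal = 1 - q idx := by
    intro idx
    rw [measure_compl (hAmeas idx) (measure_ne_top P _), measure_univ,
      ENNReal.toReal_sub_of_le prob_le_one ENNReal.one_ne_top, ENNReal.toReal_one, hPA]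
  -- decomposition of the event as a disjoint union
  set 𝒮 : Finset (Finset (Fin k × Fin m)) :=
    Finset.univ.powerset.filter (fun S => i ≤ S.card) with h𝒮
  have hunion : {ω | i ≤ (Finset.univ.filter fun idx => ω ∈ A idx).card}
      = ⋃ S ∈ 𝒮, E S := by
    ext ω
    simp only [Set.mem_setOf_eq, Set.mem_iUnion, hE_eq, h𝒮, Finset.mem_filter,
      Finset.mem_powerset, Set.mem_setOf_eq]
    constructor
    · intro h
      exact ⟨_, ⟨Finset.filter_subset _ _, h⟩, rfl⟩
    · rintro ⟨S, ⟨-, hcard⟩, rfl⟩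
      exact hcard
  have hdisj : (↑𝒮 : Set (Finset (Fin k × Fin m))).PairwiseDisjoint E := by
    intro S hS T hT hST
    simp only [Function.onFun, Set.disjoint_left, hE_eq]
    rintro ω rfl h2
    exact hST h2
  have hPsum : P {ω | i ≤ (Finset.univ.filter fun idx => ω ∈ A idx).card}
      = ∑ S ∈ 𝒮, P (E S) := by
    rw [hunion, measure_biUnion_finset hdisj fun S _ => hEmeas S]
  -- toReal of each elementary probability
  have hw : ∀ S, (P (E S)).toReal
      = ∏ idx, (if idx ∈ S then q idx else 1 - q idx) := by
    intro S
    rw [hEP, ENNReal.toReal_prod]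
    refine Finset.prod_congr rfl fun idx _ => ?_
    by_cases h : idx ∈ S <;> simp only [h, if_true, if_false]
    · exact hPA idx
    · exact hPAc idx
  -- regroup the sum by cardinality
  have h𝒮eq : 𝒮 = (Finset.Icc i (m * k)).biUnion
      (fun j => Finset.powersetCard j (Finset.univ : Finset (Fin k × Fin m))) := by
    ext S
    simp only [h𝒮, Finset.mem_filter, Finset.mem_powerset, Finset.mem_biUnion,
      Finset.mem_Icc, Finset.mem_powersetCard]
    constructor
    · intro ⟨hsub, hc⟩
      exact ⟨S.card, ⟨hc, hcardu ▸ Finset.card_le_card hsub⟩, hsub, rfl⟩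
    · rintro ⟨j, ⟨hj1, hj2⟩, hsub, rfl⟩
      exact ⟨hsub, hj1⟩
  have hgroup : ∑ S ∈ 𝒮, (P (E S)).toReal
      = ∑ j ∈ Finset.Icc i (m * k), ∑ S ∈ Finset.powersetCard j
          (Finset.univ : Finset (Fin k × Fin m)), (P (E S)).toReal := by
    rw [h𝒮eq, Finset.sum_biUnion]
    intro a ha b hb hab
    simp only [Function.onFun, Finset.disjoint_left, Finset.mem_powersetCard]
    rintro S ⟨-, rfl⟩ ⟨-, h2⟩
    exact hab h2
  -- polynomial side
  have hpolyprod : (∏ r : Fin k,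
        (C (1 - IB ((r : ℝ) + 1) ((k : ℝ) - (r : ℝ)) (F y))
          + C (IB ((r : ℝ) + 1) ((k : ℝ) - (r : ℝ)) (F y)) * X) ^ m)
      = ∏ idx : Fin k × Fin m, (C (q idx) * X + C (1 - q idx)) := by
    rw [Fintype.prod_prod_type]
    refine Finset.prod_congr rfl fun r _ => ?_
    calc (C (1 - IB ((r : ℝ) + 1) ((k : ℝ) - (r : ℝ)) (F y))
          + C (IB ((r : ℝ) + 1) ((k : ℝ) - (r : ℝ)) (F y)) * X) ^ m
        = ∏ _c : Fin m, (C (IB ((r : ℝ) + 1) ((k : ℝ) - (r : ℝ)) (F y)) * X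
            + C (1 - IB ((r : ℝ) + 1) ((k : ℝ) - (r : ℝ)) (F y))) := by
          rw [Finset.prod_const, Finset.card_univ, Fintype.card_fin, add_comm]
      _ = ∏ c : Fin m, (C (q (r, c)) * X + C (1 - q (r, c))) :=
          Finset.prod_congr rfl fun c _ => rfl
  rw [hset, hPsum, ENNReal.toReal_sum (fun S _ => measure_ne_top P _), hgroup]
  refine Finset.sum_congr rfl fun j _ => ?_
  rw [hpolyprod, coeff_prod_linear]
  exact Finset.sum_congr rfl fun S _ => hw S
end

section
/- Suppose F has finite second moment, with mean μ = ∫ y dF(y) and variance σ² = ∫ (y − μ)² dF(y). Under perfect ranking, the RSS mean estimator μ̂_RSS = (1/n) ∑_{r=1}^k ∑_{j=1}^m Y_{r,j} is unbiased for μ, and Var(μ̂_RSS) = σ²/n − (1/(nk)) ∑_{r=1}^k (μ_{r:k} − μ)², where μ_{r:k} = E[Y_{r,1}] is the mean of the r-th perfect-ranking stratum distribution F_{(r)}. In particular Var(μ̂_RSS) ≤ σ²/n. -/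
open MeasureTheory ProbabilityTheory Filter

section RSSAux

open intervalIntegral Finset


lemma prodfact (a : ℕ) : ∀ b : ℕ, a.factorial * ∏ j ∈ Finset.range (b+1), (a+1+j) = (a+b+1).factorial := by
  intro b
  induction b with
  | zero => simp [Nat.factorial_succ, mul_comm]
  | succ b ih =>
      rw [Finset.prod_range_succ, ← mul_assoc, ih,
        show a+(b+1)+1 = (a+b+1)+1 from by ring, Nat.factorial_succ (a+b+1)]
      ring

lemma beta_nat (a b : ℕ) :
    (∫ u in (0:ℝ)..1, u ^ a * (1 - u) ^ b)
      = (a.factorial : ℝ) * b.factorial / (a + b + 1).factorial := by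
  have hu : 0 < Complex.re ((a : ℂ) + 1) := by simp; positivity
  have hfa : (a.factorial : ℂ) ≠ 0 := by exact_mod_cast a.factorial_ne_zero
  have hfs : ((a+b+1).factorial : ℂ) ≠ 0 := by exact_mod_cast (a+b+1).factorial_ne_zero
  have h := Complex.betaIntegral_eval_nat_add_one_right hu b
  rw [Complex.betaIntegral] at h
  have hint : (∫ x in (0:ℝ)..1, (x:ℂ) ^ ((a:ℂ) + 1 - 1) * (1 - (x:ℂ)) ^ ((b:ℂ) + 1 - 1))
      = ((∫ u in (0:ℝ)..1, u ^ a * (1 - u) ^ b : ℝ) : ℂ) := by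
    rw [← integral_ofReal]
    apply intervalIntegral.integral_congr
    intro x _
    show (x:ℂ) ^ ((a:ℂ) + 1 - 1) * (1 - (x:ℂ)) ^ ((b:ℂ) + 1 - 1) = ((x ^ a * (1-x) ^ b : ℝ) : ℂ)
    have e1 : (a:ℂ) + 1 - 1 = ((a:ℕ):ℂ) := by ring
    have e2 : (b:ℂ) + 1 - 1 = ((b:ℕ):ℂ) := by ring
    rw [e1, e2, Complex.cpow_natCast, Complex.cpow_natCast]
    push_cast
    ring
  rw [hint] at h
  have hc : (a.factorial : ℂ) * (∏ j ∈ Finset.range (b+1), ((a:ℂ) + 1 + j)) = ((a+b+1).factorial : ℂ) := by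
    rw [show (∏ j ∈ Finset.range (b+1), ((a:ℂ) + 1 + j)) = ((∏ j ∈ Finset.range (b+1), (a+1+j) : ℕ) : ℂ) from by push_cast; ring_nf,
      ← Nat.cast_mul, prodfact a b]
  have hprod : (∏ j ∈ Finset.range (b+1), ((a:ℂ) + 1 + j)) = ((a+b+1).factorial : ℂ) / (a.factorial : ℂ) := by
    rw [eq_div_iff hfa]; linear_combination hc
  rw [hprod] at h
  have : ((∫ u in (0:ℝ)..1, u ^ a * (1 - u) ^ b : ℝ) : ℂ)
      = ((a.factorial : ℝ) * b.factorial / (a + b + 1).factorial : ℝ) := by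
    rw [h]
    push_cast
    field_simp
  exact_mod_cast this

lemma IB_eval (k r : ℕ) (hr : r < k) (t : ℝ) :
    IB ((r:ℝ)+1) ((k:ℝ) - (r:ℝ)) t
      = (∫ u in (0:ℝ)..t, u ^ r * (1-u) ^ (k-1-r))
          * ((k.factorial : ℝ) / (r.factorial * (k-1-r).factorial)) := by
  unfold IB betaFun
  have e1 : (r:ℝ) + 1 - 1 = ((r:ℕ):ℝ) := by ring
  have e2 : (k:ℝ) - (r:ℝ) - 1 = ((k-1-r : ℕ):ℝ) := by
    rw [Nat.cast_sub (by omega : r ≤ k-1), Nat.cast_sub (by omega : 1 ≤ k)]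
    push_cast
    ring
  simp only [e1, e2, Real.rpow_natCast]
  rw [beta_nat, show r + (k-1-r) + 1 = k from by omega]
  have h1 : (r.factorial : ℝ) ≠ 0 := by exact_mod_cast r.factorial_ne_zero
  have h2 : ((k-1-r).factorial : ℝ) ≠ 0 := by exact_mod_cast (k-1-r).factorial_ne_zero
  have h3 : (k.factorial : ℝ) ≠ 0 := by exact_mod_cast k.factorial_ne_zero
  field_simp

lemma IB_coeff (k r : ℕ) (hr : r < k) :
    (k.factorial : ℝ) / (r.factorial * (k-1-r).factorial) = k * (k-1).choose r := by
  have h := Nat.choose_mul_factorial_mul_factorial (by omega : r ≤ k-1)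
  have hk' : (k.factorial : ℝ) = k * (k-1).factorial := by
    conv_lhs => rw [show k = (k-1)+1 from by omega]
    rw [Nat.factorial_succ, show (k-1)+1 = k from by omega]
    push_cast; ring
  have h1 : (r.factorial : ℝ) ≠ 0 := by exact_mod_cast r.factorial_ne_zero
  have h2 : ((k-1-r).factorial : ℝ) ≠ 0 := by exact_mod_cast (k-1-r).factorial_ne_zero
  have hc : ((k-1).choose r : ℝ) * r.factorial * (k-1-r).factorial = (k-1).factorial := by
    exact_mod_cast congrArg (Nat.cast : ℕ → ℝ) h
  rw [hk', div_eq_iff (by positivity), ← hc]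
  ring

lemma IB_sum (k : ℕ) (hk : 1 ≤ k) (t : ℝ) :
    ∑ r : Fin k, IB ((r:ℝ)+1) ((k:ℝ) - (r:ℝ)) t = k * t := by
  have key : ∀ u : ℝ, ∑ r : Fin k,
      ((k.factorial : ℝ) / ((r:ℕ).factorial * (k-1-(r:ℕ)).factorial)) * (u ^ (r:ℕ) * (1-u) ^ (k-1-(r:ℕ)))
      = (k:ℝ) := by
    intro u
    have : ∀ r : Fin k, ((k.factorial : ℝ) / ((r:ℕ).factorial * (k-1-(r:ℕ)).factorial)) * (u ^ (r:ℕ) * (1-u) ^ (k-1-(r:ℕ)))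
        = (k:ℝ) * (u ^ (r:ℕ) * (1-u) ^ ((k-1)-(r:ℕ)) * ((k-1).choose (r:ℕ))) := by
      intro r
      rw [IB_coeff k r r.isLt]
      ring
    have h := add_pow u (1-u) (k-1)
    rw [show (k-1)+1 = k from by omega, show u + (1-u) = 1 from by ring, one_pow] at h
    rw [Finset.sum_congr rfl (fun r _ => this r), ← Finset.mul_sum,
      Fin.sum_univ_eq_sum_range (fun r => u ^ r * (1-u) ^ ((k-1)-r) * ((k-1).choose r : ℝ)) k,
      ← h, mul_one]
  calc ∑ r : Fin k, IB ((r:ℝ)+1) ((k:ℝ) - (r:ℝ)) t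
      = ∑ r : Fin k, ∫ u in (0:ℝ)..t,
          ((k.factorial : ℝ) / ((r:ℕ).factorial * (k-1-(r:ℕ)).factorial)) * (u ^ (r:ℕ) * (1-u) ^ (k-1-(r:ℕ))) := by
        refine Finset.sum_congr rfl fun r _ => ?_
        rw [IB_eval k r r.isLt, intervalIntegral.integral_const_mul]
        ring
    _ = ∫ u in (0:ℝ)..t, ∑ r : Fin k,
          ((k.factorial : ℝ) / ((r:ℕ).factorial * (k-1-(r:ℕ)).factorial)) * (u ^ (r:ℕ) * (1-u) ^ (k-1-(r:ℕ))) := by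
        rw [intervalIntegral.integral_finset_sum]
        intro r _
        exact (Continuous.intervalIntegrable (by fun_prop) _ _)
    _ = ∫ _ in (0:ℝ)..t, (k:ℝ) := by
        apply intervalIntegral.integral_congr
        intro u _
        exact key u
    _ = k * t := by simp [mul_comm]

end RSSAux

/-- Under perfect ranking, if the population has finite second moment with mean
`μ` and variance `σ²`, the RSS mean estimator `μ̂_RSS = (1/n) ∑_{r,j} Y_{r,j}` is
unbiased for `μ` and
`Var(μ̂_RSS) = σ²/n - (1/(n k)) ∑_{r=1}^k (μ_{r:k} - μ)² ≤ σ²/n`,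
where `μ_{r:k} = E[Y_{r,1}]` is the mean of the `r`-th stratum distribution. -/
theorem rss_mean_unbiased_var
    {Ω : Type*} [MeasurableSpace Ω] (P : Measure Ω) [IsProbabilityMeasure P]
    (ν : Measure ℝ) [IsProbabilityMeasure ν] (F : ℝ → ℝ)
    (hF : ∀ y, F y = (ν (Set.Iic y)).toReal)
    (hL2 : Integrable (fun y : ℝ => y ^ 2) ν)
    (k m : ℕ) (hk : 1 ≤ k) (hm : 1 ≤ m)
    (Y : Fin k × Fin m → Ω → ℝ)
    (hmeas : ∀ i, Measurable (Y i))
    (hmem : ∀ i, MemLp (Y i) 2 P)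
    (hindep : iIndepFun Y P)
    (hcdf : ∀ (i : Fin k × Fin m) (y : ℝ),
      (P {ω | Y i ω ≤ y}).toReal = IB ((i.1 : ℝ) + 1) ((k : ℝ) - (i.1 : ℝ)) (F y))
    (popMean popVar : ℝ)
    (hμ : popMean = ∫ y, y ∂ν)
    (hσ : popVar = ∫ y, (y - popMean) ^ 2 ∂ν)
    (μr : Fin k → ℝ)
    (hμr : ∀ i : Fin k × Fin m, (∫ ω, Y i ω ∂P) = μr i.1) :
    (∫ ω, (((m * k : ℕ) : ℝ)⁻¹ * ∑ i : Fin k × Fin m, Y i ω) ∂P) = popMean ∧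
    variance (fun ω => ((m * k : ℕ) : ℝ)⁻¹ * ∑ i : Fin k × Fin m, Y i ω) P
      = popVar / ((m * k : ℕ) : ℝ)
        - (1 / (((m * k : ℕ) : ℝ) * (k : ℝ))) * ∑ r : Fin k, (μr r - popMean) ^ 2 ∧
    variance (fun ω => ((m * k : ℕ) : ℝ)⁻¹ * ∑ i : Fin k × Fin m, Y i ω) P
      ≤ popVar / ((m * k : ℕ) : ℝ) := by
  classical
  have hk0 : (k:ℝ) ≠ 0 := Nat.cast_ne_zero.2 (by omega)
  have hm0 : (m:ℝ) ≠ 0 := Nat.cast_ne_zero.2 (by omega)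
  have hcastmk : ((m * k : ℕ) : ℝ) = (m:ℝ) * (k:ℝ) := by push_cast; ring
  set c : ℝ := ((m * k : ℕ) : ℝ)⁻¹ with hc
  have hmk0 : ((m * k : ℕ) : ℝ) ≠ 0 := by rw [hcastmk]; positivity
  -- laws
  haveI hprob : ∀ i : Fin k × Fin m, IsProbabilityMeasure (P.map (Y i)) :=
    fun i => Measure.isProbabilityMeasure_map (hmeas i).aemeasurable
  set j0 : Fin m := ⟨0, hm⟩ with hj0
  set ρ : Fin k → Measure ℝ := fun r => P.map (Y (r, j0)) with hρ
  haveI : ∀ r : Fin k, IsProbabilityMeasure (ρ r) := fun r => hprob (r, j0)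
  have hmapIic : ∀ (i : Fin k × Fin m) (y : ℝ),
      (P.map (Y i)) (Set.Iic y) = P {ω | Y i ω ≤ y} := by
    intro i y
    rw [Measure.map_apply (hmeas i) measurableSet_Iic]
    rfl
  have hlaweq : ∀ i : Fin k × Fin m, P.map (Y i) = ρ i.1 := by
    intro i
    refine MeasureTheory.Measure.ext_of_Iic _ _ (fun y => ?_)
    rw [hmapIic i y, hmapIic (i.1, j0) y]
    refine (ENNReal.toReal_eq_toReal_iff' (measure_ne_top _ _) (measure_ne_top _ _)).1 ?_
    rw [hcdf i y, hcdf (i.1, j0) y]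
  -- integrability
  have hYint : ∀ i, Integrable (Y i) P := fun i => (hmem i).integrable one_le_two
  have hYsq : ∀ i, Integrable (fun ω => Y i ω ^ 2) P := fun i => (hmem i).integrable_sq
  have hmean : ∀ i : Fin k × Fin m, ∫ ω, Y i ω ∂P = ∫ x, x ∂(ρ i.1) := by
    intro i
    rw [← hlaweq i]
    exact (integral_map (hmeas i).aemeasurable aestronglyMeasurable_id).symm
  have hsqm : ∀ i : Fin k × Fin m, ∫ ω, Y i ω ^ 2 ∂P = ∫ x, x ^ 2 ∂(ρ i.1) := by
    intro i
    rw [← hlaweq i]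
    exact (integral_map (hmeas i).aemeasurable (continuous_pow 2).aestronglyMeasurable).symm
  have hIid : ∀ r : Fin k, Integrable (fun x => x) (ρ r) := fun r =>
    (integrable_map_measure aestronglyMeasurable_id (hmeas _).aemeasurable).2 (hYint _)
  have hIsq : ∀ r : Fin k, Integrable (fun x => x ^ 2) (ρ r) := fun r =>
    (integrable_map_measure (continuous_pow 2).aestronglyMeasurable
      (hmeas _).aemeasurable).2 (hYsq _)
  -- the mixture identity
  haveI hfin : IsFiniteMeasure (∑ r : Fin k, ρ r) := by
    constructor
    rw [Measure.finset_sum_apply]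
    simp only [measure_univ, Finset.sum_const, Finset.card_univ, Fintype.card_fin, nsmul_eq_mul,
      mul_one]
    exact ENNReal.natCast_lt_top k
  haveI hfin2 : IsFiniteMeasure ((k : ENNReal) • ν) := by
    constructor
    rw [Measure.smul_apply, measure_univ, smul_eq_mul, mul_one]
    exact ENNReal.natCast_lt_top k
  have hsummeas : (∑ r : Fin k, ρ r) = (k : ENNReal) • ν := by
    refine MeasureTheory.Measure.ext_of_Iic _ _ (fun y => ?_)
    refine (ENNReal.toReal_eq_toReal_iff' (measure_ne_top _ _) (measure_ne_top _ _)).1 ?_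
    rw [Measure.finset_sum_apply, ENNReal.toReal_sum (fun r _ => measure_ne_top _ _)]
    have h1 : ∀ r : Fin k, ((ρ r) (Set.Iic y)).toReal
        = IB ((r:ℝ)+1) ((k:ℝ) - (r:ℝ)) (F y) := by
      intro r
      rw [hmapIic (r, j0) y, hcdf (r, j0) y]
    rw [Finset.sum_congr rfl (fun r _ => h1 r), IB_sum k hk (F y)]
    rw [Measure.smul_apply, smul_eq_mul, ENNReal.toReal_mul, ENNReal.toReal_natCast, hF y]
  have key : ∀ (g : ℝ → ℝ), (∀ r : Fin k, Integrable g (ρ r)) →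
      (∑ r : Fin k, ∫ x, g x ∂(ρ r)) = k * ∫ y, g y ∂ν := by
    intro g hg
    rw [← integral_finset_sum_measure (fun r _ => hg r), hsummeas, integral_smul_measure,
      ENNReal.toReal_natCast, smul_eq_mul]
  have hM1 : (∑ r : Fin k, ∫ x, (fun x => x) x ∂(ρ r)) = k * ∫ y, y ∂ν := key _ hIid
  have hM2 : (∑ r : Fin k, ∫ x, (fun x => x ^ 2) x ∂(ρ r)) = k * ∫ y, y ^ 2 ∂ν := key _ hIsq
  have hμr' : ∀ r : Fin k, μr r = ∫ x, x ∂(ρ r) := by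
    intro r
    rw [← hμr (r, j0), hmean (r, j0)]
  have hsumμr : (∑ r : Fin k, μr r) = k * popMean := by
    rw [Finset.sum_congr rfl (fun r _ => hμr' r), hμ]
    exact hM1
  -- unbiasedness
  have hintsum : Integrable (fun ω => ∑ i : Fin k × Fin m, Y i ω) P :=
    integrable_finset_sum _ (fun i _ => hYint i)
  have hunb : (∫ ω, c * ∑ i : Fin k × Fin m, Y i ω ∂P) = popMean := by
    rw [integral_const_mul, integral_finset_sum _ (fun i _ => hYint i)]
    have : (∑ i : Fin k × Fin m, ∫ ω, Y i ω ∂P) = (m:ℝ) * ∑ r : Fin k, μr r := by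
      rw [Finset.sum_congr rfl (fun i _ => hμr i), Fintype.sum_prod_type]
      simp only [Finset.sum_const, Finset.card_univ, Fintype.card_fin, nsmul_eq_mul,
        ← Finset.mul_sum]
    rw [this, hsumμr, hc, hcastmk]
    field_simp
  -- variance
  have hfun : (fun ω => c * ∑ i : Fin k × Fin m, Y i ω)
      = c • (∑ i : Fin k × Fin m, Y i) := by
    funext ω
    simp [Finset.sum_apply]
  have hpair : Set.Pairwise ↑(Finset.univ : Finset (Fin k × Fin m))
      (fun i j => IndepFun (Y i) (Y j) P) := fun i _ j _ hij => hindep.indepFun hij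
  have hvar1 : variance (fun ω => c * ∑ i : Fin k × Fin m, Y i ω) P
      = c ^ 2 * ∑ i : Fin k × Fin m, variance (Y i) P := by
    rw [hfun, variance_smul, IndepFun.variance_sum (fun i _ => hmem i) hpair]
  have hvar2 : ∀ i : Fin k × Fin m, variance (Y i) P
      = (∫ x, x ^ 2 ∂(ρ i.1)) - μr i.1 ^ 2 := by
    intro i
    rw [variance_eq_sub (hmem i), ← hμr i]
    congr 1
    · rw [← hsqm i]
      rfl
  have hvar3 : (∑ i : Fin k × Fin m, variance (Y i) P)
      = (m:ℝ) * (k * (∫ y, y ^ 2 ∂ν) - ∑ r : Fin k, μr r ^ 2) := by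
    rw [Finset.sum_congr rfl (fun i _ => hvar2 i), Fintype.sum_prod_type]
    simp only [Finset.sum_const, Finset.card_univ, Fintype.card_fin, nsmul_eq_mul]
    rw [← Finset.mul_sum, Finset.sum_sub_distrib, hM2]
  -- population variance identity
  have hy : Integrable (fun y : ℝ => y) ν := by
    have h2 : MemLp (fun y : ℝ => y) 2 ν :=
      (memLp_two_iff_integrable_sq aestronglyMeasurable_id).2 hL2
    exact h2.integrable one_le_two
  have hσ' : popVar = (∫ y, y ^ 2 ∂ν) - popMean ^ 2 := by
    rw [hσ]
    have he : (fun y : ℝ => (y - popMean) ^ 2)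
        = fun y => y ^ 2 - (2 * popMean) * y + popMean ^ 2 := by
      funext y; ring
    have h1 : Integrable (fun y : ℝ => y ^ 2 - 2 * popMean * y) ν :=
      hL2.sub (hy.const_mul (2 * popMean))
    rw [he, integral_add h1 (integrable_const _),
      integral_sub hL2 (hy.const_mul (2 * popMean)), integral_const_mul, integral_const]
    simp only [measure_univ, ENNReal.toReal_one, smul_eq_mul, one_mul, probReal_univ, mul_one]
    rw [← hμ]
    ring
  have hS : (∑ r : Fin k, (μr r - popMean) ^ 2)
      = (∑ r : Fin k, μr r ^ 2) - k * popMean ^ 2 := by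
    have he : ∀ r : Fin k, (μr r - popMean) ^ 2
        = μr r ^ 2 - (2 * popMean) * μr r + popMean ^ 2 := fun r => by ring
    rw [Finset.sum_congr rfl (fun r _ => he r), Finset.sum_add_distrib,
      Finset.sum_sub_distrib, ← Finset.mul_sum, hsumμr]
    simp only [Finset.sum_const, Finset.card_univ, Fintype.card_fin, nsmul_eq_mul]
    ring
  have hvareq : variance (fun ω => c * ∑ i : Fin k × Fin m, Y i ω) P
      = popVar / ((m * k : ℕ) : ℝ)
        - (1 / (((m * k : ℕ) : ℝ) * (k : ℝ))) * ∑ r : Fin k, (μr r - popMean) ^ 2 := by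
    rw [hvar1, hvar3, hS, hσ', hc, hcastmk]
    field_simp
    ring
  refine ⟨hunb, hvareq, ?_⟩
  rw [hvareq]
  have hpos : 0 ≤ (1 / (((m * k : ℕ) : ℝ) * (k : ℝ))) * ∑ r : Fin k, (μr r - popMean) ^ 2 := by
    apply mul_nonneg
    · rw [hcastmk]; positivity
    · exact Finset.sum_nonneg fun r _ => sq_nonneg _
  linarith
end
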